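/- Fix a natural number n ≥ 2, a real ε ∈ (0, 1), and a natural number k with k ≥ 300·(log n)/ε. Let A and B be nonempty finite subsets of a type V, and suppose A and B are in (0.1·ε)-agreement, i.e., |A △ B| < 0.1·ε·max(|A|, |B|). Then under the product measure of k independent uniform samples r₁,…,r_k from A and k independent uniform samples s₁,…,s_k from B, the probability of the event {#{i : rᵢ ∈ A \ B} ≥ 0.4·ε·k or #{i : sᵢ ∈ B \ A} ≥ 0.4·ε·k} (i.e., the event that the ProbabilisticAgreement procedure outputs 'NO') is at most 1/n³. -/

import Mathlib

set_option maxHeartbeats 1000000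

open scoped symmDiff ENNReal

/-- Counting lemma: the number of functions `f : Fin k → C` with at least `m`
coordinates landing in `T ⊆ C` is at most `C(k,m) · |T|^m · |C|^(k-m)`. -/
private lemma count_bad {V : Type*} [DecidableEq V] (C T : Finset V) (hT : T ⊆ C)
    (k m : ℕ) :
    (Finset.univ.filter (fun f : Fin k → C =>
        m ≤ (Finset.univ.filter (fun i => (f i : V) ∈ T)).card)).card
      ≤ k.choose m * T.card ^ m * C.card ^ (k - m) := by
  classical
  set T' : Finset C := Finset.univ.filter (fun x : C => (x : V) ∈ T) with hT'def
  have hT'card : T'.card = T.card := by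
    rw [hT'def, ← Fintype.card_coe T, ← Fintype.card_subtype]
    exact Fintype.card_congr
      ⟨fun x => ⟨x.1.1, x.2⟩, fun y => ⟨⟨y.1, hT y.2⟩, y.2⟩, fun x => rfl, fun y => rfl⟩
  have hsub : (Finset.univ.filter (fun f : Fin k → C =>
        m ≤ (Finset.univ.filter (fun i => (f i : V) ∈ T)).card))
      ⊆ ((Finset.univ : Finset (Fin k)).powersetCard m).biUnion
          (fun S => Finset.univ.filter (fun f : Fin k → C => ∀ i ∈ S, (f i : V) ∈ T)) := by
    intro f hf
    simp only [Finset.mem_filter, Finset.mem_univ, true_and] at hf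
    obtain ⟨S, hS, hScard⟩ := Finset.exists_subset_card_eq hf
    refine Finset.mem_biUnion.mpr ⟨S, Finset.mem_powersetCard.mpr ⟨Finset.subset_univ _, hScard⟩, ?_⟩
    simp only [Finset.mem_filter, Finset.mem_univ, true_and]
    intro i hi
    simpa using (Finset.mem_filter.mp (hS hi)).2
  have hcardS : ∀ S ∈ ((Finset.univ : Finset (Fin k)).powersetCard m),
      (Finset.univ.filter (fun f : Fin k → C => ∀ i ∈ S, (f i : V) ∈ T)).card
        = T.card ^ m * C.card ^ (k - m) := by
    intro S hS
    obtain ⟨-, hScard⟩ := Finset.mem_powersetCard.mp hS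
    have hEq : (Finset.univ.filter (fun f : Fin k → C => ∀ i ∈ S, (f i : V) ∈ T))
        = Fintype.piFinset (fun i => if i ∈ S then T' else Finset.univ) := by
      ext f
      simp only [Finset.mem_filter, Finset.mem_univ, true_and, Fintype.mem_piFinset, hT'def]
      constructor
      · intro h i
        by_cases hi : i ∈ S
        · simp [hi, h i hi]
        · simp [hi]
      · intro h i hi
        have := h i
        simp [hi] at this
        exact this
    rw [hEq, Fintype.card_piFinset]
    have hite : ∀ i : Fin k, (if i ∈ S then T' else Finset.univ).card
        = if i ∈ S then T.card else C.card := by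
      intro i
      by_cases hi : i ∈ S <;> simp [hi, hT'card, Finset.card_univ, Fintype.card_coe]
    simp_rw [hite]
    rw [Finset.prod_ite, Finset.prod_const, Finset.prod_const]
    have h1 : (Finset.univ.filter (fun i : Fin k => i ∈ S)) = S := by
      ext i; simp
    have h2 : (Finset.univ.filter (fun i : Fin k => ¬ i ∈ S)) = Sᶜ := by
      ext i; simp
    rw [h1, h2, hScard, Finset.card_compl, hScard, Fintype.card_fin]
  calc (Finset.univ.filter (fun f : Fin k → C =>
        m ≤ (Finset.univ.filter (fun i => (f i : V) ∈ T)).card)).card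
      ≤ (((Finset.univ : Finset (Fin k)).powersetCard m).biUnion
          (fun S => Finset.univ.filter (fun f : Fin k → C => ∀ i ∈ S, (f i : V) ∈ T))).card :=
        Finset.card_le_card hsub
    _ ≤ ∑ S ∈ ((Finset.univ : Finset (Fin k)).powersetCard m),
          (Finset.univ.filter (fun f : Fin k → C => ∀ i ∈ S, (f i : V) ∈ T)).card :=
        Finset.card_biUnion_le
    _ = ∑ _S ∈ ((Finset.univ : Finset (Fin k)).powersetCard m),
          T.card ^ m * C.card ^ (k - m) := Finset.sum_congr rfl hcardS
    _ = k.choose m * (T.card ^ m * C.card ^ (k - m)) := by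
        rw [Finset.sum_const, Finset.card_powersetCard, Finset.card_univ, Fintype.card_fin,
          smul_eq_mul]
    _ = k.choose m * T.card ^ m * C.card ^ (k - m) := by ring

/-- Arithmetic core: the per-side bound `N · 2n³ ≤ c^k`. -/
private lemma side_bound (n : ℕ) (hn : 2 ≤ n) (ε : ℝ) (hε0 : 0 < ε) (hε1 : ε < 1)
    (k : ℕ) (hk : 300 * Real.log n / ε ≤ (k : ℝ))
    (c d N : ℕ) (hc : 0 < c) (hd : 9 * (d : ℝ) < ε * c)
    (hN : N ≤ k.choose (Nat.ceil (0.4 * ε * k)) * d ^ (Nat.ceil (0.4 * ε * k))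
            * c ^ (k - Nat.ceil (0.4 * ε * k))) :
    (N : ℝ) * (2 * (n : ℝ) ^ 3) ≤ (c : ℝ) ^ k := by
  obtain ⟨m, hmdef⟩ : ∃ m : ℕ, m = Nat.ceil (0.4 * ε * k) := ⟨_, rfl⟩
  rw [← hmdef] at hN
  have hlog2 : (0:ℝ) < Real.log 2 := Real.log_pos (by norm_num)
  have hlogn : Real.log 2 ≤ Real.log n :=
    Real.log_le_log (by norm_num) (by exact_mod_cast hn)
  have hεk : 300 * Real.log n ≤ ε * k := by
    rw [div_le_iff₀ hε0] at hk
    linarith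
  have hm1 : 0.4 * ε * (k : ℝ) ≤ (m : ℝ) := by rw [hmdef]; exact Nat.le_ceil _
  have hm_low : 120 * Real.log n ≤ (m : ℝ) := by nlinarith
  have hm_posR : (0:ℝ) < (m : ℝ) := by nlinarith
  by_cases hmk : k < m
  · have hch : k.choose m = 0 := Nat.choose_eq_zero_of_lt hmk
    rw [hch] at hN
    simp only [zero_mul] at hN
    have hN0 : N = 0 := Nat.le_zero.mp hN
    rw [hN0]
    push_cast
    have : (0:ℝ) ≤ (c:ℝ) ^ k := by positivity
    linarith
  push_neg at hmk
  -- `2 n^3 ≤ (25/19)^m`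
  have hq : (2 : ℝ) * (n : ℝ) ^ 3 ≤ ((25 : ℝ) / 19) ^ m := by
    have hexp110 : Real.exp (1 / 10) ≤ 10 / 9 := by
      have h9 : (9 / 10 : ℝ) ≤ Real.exp (-(1 / 10)) := by
        have := Real.add_one_le_exp (-(1 / 10) : ℝ)
        linarith
      have hmul : Real.exp (-(1 / 10)) * Real.exp (1 / 10) = 1 := by
        rw [← Real.exp_add]; norm_num
      nlinarith [Real.exp_pos (1 / 10 : ℝ),
        mul_le_mul_of_nonneg_right h9 (Real.exp_pos (1 / 10 : ℝ)).le]
    have hlog1019 : (1 : ℝ) / 10 ≤ Real.log (25 / 19) :=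
      (Real.le_log_iff_exp_le (by norm_num)).mpr (by linarith)
    have h1 : Real.exp ((m : ℝ) * (1 / 10)) ≤ ((25 : ℝ) / 19) ^ m := by
      calc Real.exp ((m : ℝ) * (1 / 10))
          ≤ Real.exp ((m : ℝ) * Real.log (25 / 19)) :=
            Real.exp_le_exp.mpr (mul_le_mul_of_nonneg_left hlog1019 hm_posR.le)
        _ = ((25 : ℝ) / 19) ^ m := by
            rw [Real.exp_nat_mul, Real.exp_log (by norm_num)]
    have h2 : (2 : ℝ) * (n : ℝ) ^ 3 ≤ Real.exp ((m : ℝ) * (1 / 10)) := by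
      have hn0R : (0:ℝ) < (n : ℝ) := by positivity
      have hn12 : Real.exp (12 * Real.log n) = (n : ℝ) ^ 12 := by
        rw [show (12:ℝ) = ((12:ℕ):ℝ) by norm_num, Real.exp_nat_mul, Real.exp_log hn0R]
      have hmono : Real.exp (12 * Real.log n) ≤ Real.exp ((m : ℝ) * (1 / 10)) :=
        Real.exp_le_exp.mpr (by linarith)
      have hn2 : (2 : ℝ) ≤ (n : ℝ) := by exact_mod_cast hn
      have h9 : (2 : ℝ) ≤ (n : ℝ) ^ 9 := by
        calc (2:ℝ) ≤ 2 ^ 9 := by norm_num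
          _ ≤ (n : ℝ) ^ 9 := pow_le_pow_left₀ (by norm_num) hn2 9
      have h12 : (2 : ℝ) * (n : ℝ) ^ 3 ≤ (n : ℝ) ^ 12 := by
        nlinarith [mul_le_mul_of_nonneg_right h9
          (by positivity : (0:ℝ) ≤ (n : ℝ) ^ 3)]
      calc (2 : ℝ) * (n : ℝ) ^ 3 ≤ (n : ℝ) ^ 12 := h12
        _ = Real.exp (12 * Real.log n) := hn12.symm
        _ ≤ Real.exp ((m : ℝ) * (1 / 10)) := hmono
    linarith
  -- main product inequality
  have hcR : (0:ℝ) < (c : ℝ) := by exact_mod_cast hc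
  have he1 : Real.exp 1 ≤ 2.72 := le_of_lt (lt_trans Real.exp_one_lt_d9 (by norm_num))
  have he1pos : (0:ℝ) < Real.exp 1 := Real.exp_pos 1
  have hstep1 : (k.choose m : ℝ) * (Nat.factorial m : ℝ) ≤ (k : ℝ) ^ m := by
    have h := Nat.descFactorial_le_pow k m
    rw [Nat.descFactorial_eq_factorial_mul_choose, mul_comm] at h
    exact_mod_cast h
  have hstep2 : (m : ℝ) ^ m ≤ Real.exp 1 ^ m * (Nat.factorial m : ℝ) := by
    have h := Real.pow_div_factorial_le_exp (x := (m : ℝ)) hm_posR.le m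
    have hfac : (0:ℝ) < (Nat.factorial m : ℝ) := by exact_mod_cast Nat.factorial_pos m
    rw [div_le_iff₀ hfac] at h
    calc (m : ℝ) ^ m ≤ Real.exp (m : ℝ) * (Nat.factorial m : ℝ) := h
      _ = Real.exp 1 ^ m * (Nat.factorial m : ℝ) := by
          rw [← Real.exp_nat_mul, mul_one]
  have hstep4 : (k : ℝ) * d * (25 / 19) * Real.exp 1 ≤ (c : ℝ) * m := by
    have hd' : (d : ℝ) ≤ ε * c / 9 := by linarith
    have hkpos : (0:ℝ) ≤ (k : ℝ) := Nat.cast_nonneg k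
    have h1 : (k : ℝ) * d ≤ (k : ℝ) * (ε * c / 9) :=
      mul_le_mul_of_nonneg_left hd' hkpos
    have h2 : ε * (k : ℝ) * c ≤ 2.5 * (m : ℝ) * c := by nlinarith
    have hkd : (k : ℝ) * d ≤ 2.5 * (m : ℝ) * (c : ℝ) / 9 := by nlinarith
    have hfin : (k : ℝ) * d * ((25 / 19) * Real.exp 1)
        ≤ (2.5 * (m : ℝ) * (c : ℝ) / 9) * ((25 / 19) * 2.72) := by
      apply mul_le_mul hkd _ (by positivity) _
      · linarith
      · have hm0 : (0:ℝ) ≤ (m : ℝ) := Nat.cast_nonneg m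
        have hc0 : (0:ℝ) ≤ (c : ℝ) := Nat.cast_nonneg c
        positivity
    have hmc : (0:ℝ) ≤ (m : ℝ) * (c : ℝ) := by positivity
    nlinarith [hfin]
  have hG : (k.choose m : ℝ) * (d : ℝ) ^ m * (2 * (n : ℝ) ^ 3) ≤ (c : ℝ) ^ m := by
    have hfacepos : (0:ℝ) < (Nat.factorial m : ℝ) * Real.exp 1 ^ m := by positivity
    rw [← mul_le_mul_iff_of_pos_right hfacepos]
    calc (k.choose m : ℝ) * (d : ℝ) ^ m * (2 * (n : ℝ) ^ 3)
          * ((Nat.factorial m : ℝ) * Real.exp 1 ^ m)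
        = ((k.choose m : ℝ) * (Nat.factorial m : ℝ))
            * ((d : ℝ) ^ m * ((2 * (n : ℝ) ^ 3) * Real.exp 1 ^ m)) := by ring
      _ ≤ ((k : ℝ) ^ m) * ((d : ℝ) ^ m * (((25 : ℝ) / 19) ^ m * Real.exp 1 ^ m)) := by
          apply mul_le_mul hstep1
          · apply mul_le_mul_of_nonneg_left
            · exact mul_le_mul_of_nonneg_right hq (by positivity)
            · positivity
          · positivity
          · positivity
      _ = ((k : ℝ) * d * (25 / 19) * Real.exp 1) ^ m := by
          rw [mul_pow, mul_pow, mul_pow]; ring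
      _ ≤ ((c : ℝ) * m) ^ m := pow_le_pow_left₀ (by positivity) hstep4 m
      _ = (c : ℝ) ^ m * (m : ℝ) ^ m := mul_pow _ _ _
      _ ≤ (c : ℝ) ^ m * (Real.exp 1 ^ m * (Nat.factorial m : ℝ)) :=
          mul_le_mul_of_nonneg_left hstep2 (by positivity)
      _ = (c : ℝ) ^ m * ((Nat.factorial m : ℝ) * Real.exp 1 ^ m) := by ring
  have hNR : (N : ℝ) ≤ (k.choose m : ℝ) * (d : ℝ) ^ m * (c : ℝ) ^ (k - m) := by
    exact_mod_cast hN
  calc (N : ℝ) * (2 * (n : ℝ) ^ 3)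
      ≤ ((k.choose m : ℝ) * (d : ℝ) ^ m * (c : ℝ) ^ (k - m)) * (2 * (n : ℝ) ^ 3) :=
        mul_le_mul_of_nonneg_right hNR (by positivity)
    _ = ((k.choose m : ℝ) * (d : ℝ) ^ m * (2 * (n : ℝ) ^ 3)) * (c : ℝ) ^ (k - m) := by ring
    _ ≤ (c : ℝ) ^ m * (c : ℝ) ^ (k - m) :=
        mul_le_mul_of_nonneg_right hG (by positivity)
    _ = (c : ℝ) ^ k := by rw [← pow_add, Nat.add_sub_cancel' hmk]

/-- From the agreement hypothesis: `9 |A\B| < ε |A|`. -/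
private lemma nine_lt {V : Type*} [DecidableEq V] {ε : ℝ} (hε0 : 0 < ε) (hε1 : ε < 1)
    {A B : Finset V}
    (hagree : ((A ∆ B).card : ℝ) < 0.1 * ε * (max A.card B.card : ℕ)) :
    9 * (((A \ B).card : ℕ) : ℝ) < ε * A.card := by
  have hABsub : A \ B ⊆ A ∆ B := by
    intro x hx
    rw [Finset.mem_symmDiff]
    rw [Finset.mem_sdiff] at hx
    exact Or.inl hx
  have hBAsub : B \ A ⊆ A ∆ B := by
    intro x hx
    rw [Finset.mem_symmDiff]
    rw [Finset.mem_sdiff] at hx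
    exact Or.inr hx
  have hd_le : ((A \ B).card : ℝ) ≤ ((A ∆ B).card : ℝ) := by
    exact_mod_cast Finset.card_le_card hABsub
  have hB_le : (B.card : ℝ) ≤ (A.card : ℝ) + ((A ∆ B).card : ℝ) := by
    have h1 : B.card ≤ A.card + (B \ A).card := by
      calc B.card ≤ (B ∪ A).card := Finset.card_le_card Finset.subset_union_left
        _ = (B \ A).card + A.card := (Finset.card_sdiff_add_card B A).symm
        _ = A.card + (B \ A).card := by ring
    have h2 : (B \ A).card ≤ (A ∆ B).card := Finset.card_le_card hBAsub
    have : B.card ≤ A.card + (A ∆ B).card := by omega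
    exact_mod_cast this
  have hmax : ((max A.card B.card : ℕ) : ℝ) ≤ (A.card : ℝ) + ((A ∆ B).card : ℝ) := by
    rw [Nat.cast_max]
    apply max_le _ hB_le
    linarith [Nat.cast_nonneg (α := ℝ) (A ∆ B).card]
  have hS_nonneg : (0:ℝ) ≤ ((A ∆ B).card : ℝ) := Nat.cast_nonneg _
  have hεS : ε * ((A ∆ B).card : ℝ) ≤ ((A ∆ B).card : ℝ) := by nlinarith
  nlinarith

/-- Completeness of `ProbabilisticAgreement`: if `A` and `B` are in
`0.1·ε`-agreement (`|A △ B| < 0.1·ε·max(|A|,|B|)`), then, drawing `k`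
independent uniform samples from `A` and `k` independent uniform samples from
`B` (modelled by the uniform distribution on the product space
`(Fin k → A) × (Fin k → B)`), the probability that at least `0.4·ε·k` of the
`A`-samples land in `A \ B` OR at least `0.4·ε·k` of the `B`-samples land in
`B \ A` (i.e. that the procedure outputs "NO") is at most `1/n³`. -/
theorem probabilisticAgreement_no_prob_le {V : Type*} [DecidableEq V]
    (n : ℕ) (hn : 2 ≤ n) (ε : ℝ) (hε0 : 0 < ε) (hε1 : ε < 1)
    (k : ℕ) (hk : 300 * Real.log n / ε ≤ (k : ℝ))
    (A B : Finset V) [Nonempty (A : Type _)] [Nonempty (B : Type _)]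
    (hagree : ((A ∆ B).card : ℝ) < 0.1 * ε * (max A.card B.card : ℕ)) :
    (PMF.uniformOfFintype ((Fin k → A) × (Fin k → B))).toOuterMeasure
        {ω | 0.4 * ε * k ≤ ((Finset.univ.filter
                (fun i : Fin k => (ω.1 i : V) ∈ A \ B)).card : ℝ) ∨
             0.4 * ε * k ≤ ((Finset.univ.filter
                (fun i : Fin k => (ω.2 i : V) ∈ B \ A)).card : ℝ)}
      ≤ 1 / (n : ℝ≥0∞) ^ 3 := by
  classical
  have hAne : A.Nonempty := Finset.nonempty_coe_sort.mp ‹_›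
  have hBne : B.Nonempty := Finset.nonempty_coe_sort.mp ‹_›
  have hsetEq : {ω : (Fin k → A) × (Fin k → B) |
        0.4 * ε * k ≤ ((Finset.univ.filter
            (fun i : Fin k => (ω.1 i : V) ∈ A \ B)).card : ℝ) ∨
        0.4 * ε * k ≤ ((Finset.univ.filter
            (fun i : Fin k => (ω.2 i : V) ∈ B \ A)).card : ℝ)}
      = {ω : (Fin k → A) × (Fin k → B) |
          Nat.ceil (0.4 * ε * k)
            ≤ (Finset.univ.filter (fun i : Fin k => (ω.1 i : V) ∈ A \ B)).card ∨
          Nat.ceil (0.4 * ε * k)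
            ≤ (Finset.univ.filter (fun i : Fin k => (ω.2 i : V) ∈ B \ A)).card} :=
    Set.ext fun ω => (or_congr Nat.ceil_le Nat.ceil_le).symm
  rw [hsetEq, PMF.toOuterMeasure_uniformOfFintype_apply]
  have hcardΩ : Fintype.card ((Fin k → A) × (Fin k → B)) = A.card ^ k * B.card ^ k := by
    simp [Fintype.card_pi_const, Fintype.card_coe]
  -- the cardinality of the event
  have hcardE : Nat.card {ω : (Fin k → A) × (Fin k → B) |
          Nat.ceil (0.4 * ε * k)
            ≤ (Finset.univ.filter (fun i : Fin k => (ω.1 i : V) ∈ A \ B)).card ∨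
          Nat.ceil (0.4 * ε * k)
            ≤ (Finset.univ.filter (fun i : Fin k => (ω.2 i : V) ∈ B \ A)).card}
      ≤ (Finset.univ.filter (fun f : Fin k → A => Nat.ceil (0.4 * ε * k)
            ≤ (Finset.univ.filter (fun i : Fin k => (f i : V) ∈ A \ B)).card)).card
          * B.card ^ k
        + A.card ^ k
          * (Finset.univ.filter (fun g : Fin k → B => Nat.ceil (0.4 * ε * k)
            ≤ (Finset.univ.filter (fun i : Fin k => (g i : V) ∈ B \ A)).card)).card := by
    rw [show Nat.card {ω : (Fin k → A) × (Fin k → B) |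
          Nat.ceil (0.4 * ε * k)
            ≤ (Finset.univ.filter (fun i : Fin k => (ω.1 i : V) ∈ A \ B)).card ∨
          Nat.ceil (0.4 * ε * k)
            ≤ (Finset.univ.filter (fun i : Fin k => (ω.2 i : V) ∈ B \ A)).card}
        = Fintype.card {ω : (Fin k → A) × (Fin k → B) //
          Nat.ceil (0.4 * ε * k)
            ≤ (Finset.univ.filter (fun i : Fin k => (ω.1 i : V) ∈ A \ B)).card ∨
          Nat.ceil (0.4 * ε * k)
            ≤ (Finset.univ.filter (fun i : Fin k => (ω.2 i : V) ∈ B \ A)).card}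
        from Nat.card_eq_fintype_card, Fintype.card_subtype]
    have hsplit : (Finset.univ.filter (fun ω : (Fin k → A) × (Fin k → B) =>
          Nat.ceil (0.4 * ε * k)
            ≤ (Finset.univ.filter (fun i : Fin k => (ω.1 i : V) ∈ A \ B)).card ∨
          Nat.ceil (0.4 * ε * k)
            ≤ (Finset.univ.filter (fun i : Fin k => (ω.2 i : V) ∈ B \ A)).card))
        ⊆ ((Finset.univ.filter (fun f : Fin k → A => Nat.ceil (0.4 * ε * k)
              ≤ (Finset.univ.filter (fun i : Fin k => (f i : V) ∈ A \ B)).card))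
            ×ˢ (Finset.univ : Finset (Fin k → B)))
          ∪ ((Finset.univ : Finset (Fin k → A))
            ×ˢ (Finset.univ.filter (fun g : Fin k → B => Nat.ceil (0.4 * ε * k)
              ≤ (Finset.univ.filter (fun i : Fin k => (g i : V) ∈ B \ A)).card))) := by
      intro ω hω
      simp only [Finset.mem_filter, Finset.mem_univ, true_and] at hω
      rcases hω with h | h
      · exact Finset.mem_union_left _ (Finset.mem_product.mpr
          ⟨Finset.mem_filter.mpr ⟨Finset.mem_univ _, h⟩, Finset.mem_univ _⟩)
      · exact Finset.mem_union_right _ (Finset.mem_product.mpr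
          ⟨Finset.mem_univ _, Finset.mem_filter.mpr ⟨Finset.mem_univ _, h⟩⟩)
    calc _ ≤ _ := Finset.card_le_card hsplit
      _ ≤ _ := Finset.card_union_le _ _
      _ = _ := by
          rw [Finset.card_product, Finset.card_product, Finset.card_univ, Finset.card_univ,
            Fintype.card_pi_const, Fintype.card_pi_const, Fintype.card_coe, Fintype.card_coe]
  -- counting bounds for each side
  have hNAbound := count_bad A (A \ B) Finset.sdiff_subset k (Nat.ceil (0.4 * ε * k))
  have hNBbound := count_bad B (B \ A) Finset.sdiff_subset k (Nat.ceil (0.4 * ε * k))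
  -- agreement bounds
  have hdA : 9 * (((A \ B).card : ℕ) : ℝ) < ε * A.card := nine_lt hε0 hε1 hagree
  have hdB : 9 * (((B \ A).card : ℕ) : ℝ) < ε * B.card := by
    have hagree' : ((B ∆ A).card : ℝ) < 0.1 * ε * (max B.card A.card : ℕ) := by
      rwa [symmDiff_comm, max_comm]
    exact nine_lt hε0 hε1 hagree'
  -- per-side real bounds
  have hNAreal :=
    side_bound n hn ε hε0 hε1 k hk A.card (A \ B).card _ hAne.card_pos hdA hNAbound
  have hNBreal :=
    side_bound n hn ε hε0 hε1 k hk B.card (B \ A).card _ hBne.card_pos hdB hNBbound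
  -- the natural-number inequality
  have hnat : ((Finset.univ.filter (fun f : Fin k → A => Nat.ceil (0.4 * ε * k)
            ≤ (Finset.univ.filter (fun i : Fin k => (f i : V) ∈ A \ B)).card)).card
          * B.card ^ k
        + A.card ^ k
          * (Finset.univ.filter (fun g : Fin k → B => Nat.ceil (0.4 * ε * k)
            ≤ (Finset.univ.filter (fun i : Fin k => (g i : V) ∈ B \ A)).card)).card)
        * n ^ 3 ≤ A.card ^ k * B.card ^ k := by
    have hak : (0:ℝ) ≤ (A.card : ℝ) ^ k := by positivity
    have hbk : (0:ℝ) ≤ (B.card : ℝ) ^ k := by positivity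
    have hreal : (((Finset.univ.filter (fun f : Fin k → A => Nat.ceil (0.4 * ε * k)
            ≤ (Finset.univ.filter (fun i : Fin k => (f i : V) ∈ A \ B)).card)).card : ℝ)
          * (B.card : ℝ) ^ k
        + (A.card : ℝ) ^ k
          * ((Finset.univ.filter (fun g : Fin k → B => Nat.ceil (0.4 * ε * k)
            ≤ (Finset.univ.filter (fun i : Fin k => (g i : V) ∈ B \ A)).card)).card : ℝ))
        * (n : ℝ) ^ 3 ≤ (A.card : ℝ) ^ k * (B.card : ℝ) ^ k := by
      nlinarith [mul_le_mul_of_nonneg_right hNAreal hbk,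
        mul_le_mul_of_nonneg_right hNBreal hak]
    have := hreal
    push_cast at this ⊢
    exact_mod_cast this
  have hE_le := le_trans (Nat.mul_le_mul_right (n ^ 3) hcardE) hnat
  -- transfer to ℝ≥0∞
  have hnne : n ≠ 0 := Nat.one_le_iff_ne_zero.mp (le_trans (by norm_num) hn)
  have hn0 : (n : ℝ≥0∞) ≠ 0 := Nat.cast_ne_zero.mpr hnne
  have hn3ne : ((n : ℝ≥0∞) ^ 3) ≠ 0 := pow_ne_zero 3 hn0
  have hn3top : ((n : ℝ≥0∞) ^ 3) ≠ ⊤ := ENNReal.pow_ne_top (ENNReal.natCast_ne_top n)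
  have hMne : ((A.card ^ k * B.card ^ k : ℕ) : ℝ≥0∞) ≠ 0 :=
    Nat.cast_ne_zero.mpr
      (Nat.mul_ne_zero (pow_ne_zero k hAne.card_pos.ne') (pow_ne_zero k hBne.card_pos.ne'))
  have hMtop : ((A.card ^ k * B.card ^ k : ℕ) : ℝ≥0∞) ≠ ⊤ := ENNReal.natCast_ne_top _
  have hkey : (Nat.card {ω : (Fin k → A) × (Fin k → B) |
          Nat.ceil (0.4 * ε * k)
            ≤ (Finset.univ.filter (fun i : Fin k => (ω.1 i : V) ∈ A \ B)).card ∨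
          Nat.ceil (0.4 * ε * k)
            ≤ (Finset.univ.filter (fun i : Fin k => (ω.2 i : V) ∈ B \ A)).card} : ℝ≥0∞)
        * (n : ℝ≥0∞) ^ 3 ≤ ((A.card ^ k * B.card ^ k : ℕ) : ℝ≥0∞) := by
    have := (Nat.cast_le (α := ℝ≥0∞)).mpr hE_le
    push_cast at this ⊢
    exact this
  suffices hfin : ((Nat.card {ω : (Fin k → A) × (Fin k → B) |
          Nat.ceil (0.4 * ε * k)
            ≤ (Finset.univ.filter (fun i : Fin k => (ω.1 i : V) ∈ A \ B)).card ∨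
          Nat.ceil (0.4 * ε * k)
            ≤ (Finset.univ.filter (fun i : Fin k => (ω.2 i : V) ∈ B \ A)).card} : ℕ) : ℝ≥0∞)
        / ((A.card ^ k * B.card ^ k : ℕ) : ℝ≥0∞) ≤ 1 / (n : ℝ≥0∞) ^ 3 by
    convert hfin using 2
    · rw [Nat.card_eq_fintype_card]
    · exact congrArg Nat.cast hcardΩ
  rw [ENNReal.div_le_iff hMne hMtop]
  calc (Nat.card {ω : (Fin k → A) × (Fin k → B) |
          Nat.ceil (0.4 * ε * k)
            ≤ (Finset.univ.filter (fun i : Fin k => (ω.1 i : V) ∈ A \ B)).card ∨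
          Nat.ceil (0.4 * ε * k)
            ≤ (Finset.univ.filter (fun i : Fin k => (ω.2 i : V) ∈ B \ A)).card} : ℝ≥0∞)
      ≤ ((A.card ^ k * B.card ^ k : ℕ) : ℝ≥0∞) / (n : ℝ≥0∞) ^ 3 :=
        (ENNReal.le_div_iff_mul_le (Or.inl hn3ne) (Or.inl hn3top)).mpr hkey
    _ = 1 / (n : ℝ≥0∞) ^ 3 * ((A.card ^ k * B.card ^ k : ℕ) : ℝ≥0∞) := by
        rw [one_div, div_eq_mul_inv, mul_comm]
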